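/- Let Z be a topological space, z_0 ∈ Z, and let 𝓑 be a basis for the topology of Z. Then the collection 𝒲 of all sets W_{c,t}, where c ranges over chains in 𝓑 and t over tuples 0 = t_0 < t_1 < ⋯ < t_n = 1, is a basis for the topology of the path space P = {γ ∈ C([0,1], Z) : γ(0) = z_0} with the compact-open topology. -/

import Mathlib

open TopologicalSpace unitInterval

variable {Z : Type} [TopologicalSpace Z]

/-- The set `W_{c,t}` of based paths `γ` with `γ(t_i) ∈ V_i` and `γ([t_{i-1}, t_i]) ⊆ U_i`. -/
def pathBasisSet (z₀ : Z) (n : ℕ) (U V : Fin n → Set Z) (t : Fin (n + 1) → I) :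
    Set {γ : C(I, Z) // γ 0 = z₀} :=
  {γ | ∀ i : Fin n, γ.1 (t i.succ) ∈ V i ∧
    ∀ s : I, t i.castSucc ≤ s → s ≤ t i.succ → γ.1 s ∈ U i}

/-- `(U_1, V_1, …, U_n, V_n)` is a chain in `𝓑`:
`U_1 ⊇ V_1 ⊆ U_2 ⊇ V_2 ⊆ ⋯ ⊆ U_n ⊇ V_n`. -/
def IsChainIn (𝓑 : Set (Set Z)) (n : ℕ) (U V : Fin n → Set Z) : Prop :=
  (∀ i, U i ∈ 𝓑) ∧ (∀ i, V i ∈ 𝓑) ∧ (∀ i, V i ⊆ U i) ∧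
    ∀ i j : Fin n, (j : ℕ) = (i : ℕ) + 1 → V i ⊆ U j

/-- The collection `𝒲` of all the sets `W_{c,t}`. -/
def pathBasis (z₀ : Z) (𝓑 : Set (Set Z)) : Set (Set {γ : C(I, Z) // γ 0 = z₀}) :=
  {W | ∃ (n : ℕ) (U V : Fin n → Set Z) (t : Fin (n + 1) → I),
    IsChainIn 𝓑 n U V ∧ StrictMono t ∧ t 0 = 0 ∧ t (Fin.last n) = 1 ∧
      W = pathBasisSet z₀ n U V t}

/-- The sets `W_{c,t}` form a basis for the compact-open topology on the
space of paths starting at `z₀`. -/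
theorem pathBasis_isTopologicalBasis (z₀ : Z) (𝓑 : Set (Set Z))
    (h𝓑 : IsTopologicalBasis 𝓑) :
    IsTopologicalBasis (pathBasis z₀ 𝓑) := by
  apply isTopologicalBasis_of_isOpen_of_nhds
  · rintro W ⟨n, U, V, t, ⟨hU, hV, -, -⟩, -, -, -, rfl⟩
    have hrw : pathBasisSet z₀ n U V t =
        ⋂ i : Fin n,
          ((fun γ : {γ : C(I,Z) // γ 0 = z₀} => γ.1 (t i.succ)) ⁻¹' V i ∩
            Subtype.val ⁻¹' {f : C(I, Z) |
              Set.MapsTo f (Set.Icc (t i.castSucc) (t i.succ)) (U i)}) := by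
      ext γ
      simp only [pathBasisSet, Set.mem_setOf_eq, Set.mem_iInter, Set.mem_inter_iff,
        Set.mem_preimage, Set.MapsTo, Set.mem_Icc]
      exact ⟨fun h i => ⟨(h i).1, fun s hs => (h i).2 s hs.1 hs.2⟩,
        fun h i => ⟨(h i).1, fun s h1 h2 => (h i).2 ⟨h1, h2⟩⟩⟩
    rw [hrw]
    refine isOpen_iInter_of_finite fun i => IsOpen.inter ?_ ?_
    · exact (h𝓑.isOpen (hV i)).preimage
        ((continuous_eval_const _).comp continuous_subtype_val)
    · exact (ContinuousMap.isOpen_setOf_mapsTo isClosed_Icc.isCompact (h𝓑.isOpen (hU i))).preimage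
        continuous_subtype_val
  · rintro γ S hγS hS
    obtain ⟨S', hS', rfl⟩ := isOpen_induced_iff.mp hS
    have hγS' : γ.1 ∈ S' := hγS
    have hbasis := TopologicalSpace.isTopologicalBasis_of_subbasis
      (ContinuousMap.compactOpen_eq (X := I) (Y := Z))
    obtain ⟨b, ⟨F, ⟨hFfin, hFsub⟩, rfl⟩, hγb, hbS⟩ :=
      hbasis.exists_subset_of_mem_open hγS' hS'
    haveI : Finite F := hFfin.to_subtype
    choose K hK O hO hm using fun m : F => Set.mem_image2.mp (hFsub m.2)
    have hγK : ∀ m : F, Set.MapsTo γ.1 (K m) (O m) := by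
      intro m
      have h2 := Set.mem_sInter.mp hγb m.1 m.2
      rw [← hm m] at h2
      exact h2
    -- local data: basic set B x and open nbhd A x of each point x
    have key : ∀ x : I, ∃ (B : Set Z) (A : Set I), B ∈ 𝓑 ∧ IsOpen A ∧ x ∈ A ∧
        Set.MapsTo γ.1 A B ∧ ∀ m : F, (A ∩ K m).Nonempty → B ⊆ O m := by
      intro x
      have hNopen : IsOpen (⋂ m : F, ⋂ (_ : x ∈ K m), O m) :=
        isOpen_iInter_of_finite fun m => isOpen_iInter_of_finite fun _ => hO m
      have hγN : γ.1 x ∈ ⋂ m : F, ⋂ (_ : x ∈ K m), O m := by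
        simp only [Set.mem_iInter]
        exact fun m hx => hγK m hx
      obtain ⟨B, hB𝓑, hγB, hBN⟩ := h𝓑.exists_subset_of_mem_open hγN hNopen
      refine ⟨B, (γ.1 ⁻¹' B) ∩ ⋂ m : F, ⋂ (_ : x ∉ K m), (K m)ᶜ, hB𝓑, ?_, ?_, ?_, ?_⟩
      · exact ((h𝓑.isOpen hB𝓑).preimage γ.1.continuous).inter
          (isOpen_iInter_of_finite fun m => isOpen_iInter_of_finite fun _ =>
            (hK m).isClosed.isOpen_compl)
      · refine ⟨hγB, ?_⟩
        simp only [Set.mem_iInter, Set.mem_compl_iff]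
        exact fun m hx h => hx h
      · exact fun s hs => hs.1
      · rintro m ⟨s, hsA, hsK⟩
        by_cases hx : x ∈ K m
        · intro z hz
          have h3 := hBN hz
          simp only [Set.mem_iInter] at h3
          exact h3 m hx
        · exfalso
          have h3 := hsA.2
          simp only [Set.mem_iInter, Set.mem_compl_iff] at h3
          exact h3 m hx hsK
    choose B A hB hAopen hxA hmapsto hkeyBA using key
    obtain ⟨δ, hδ, hleb⟩ := lebesgue_number_lemma_of_metric isCompact_univ hAopen
      (fun x _ => Set.mem_iUnion.mpr ⟨x, hxA x⟩)
    obtain ⟨n₀, hn₀⟩ := exists_nat_one_div_lt hδ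
    set N := n₀ + 1 with hN
    have hNpos : (0:ℝ) < (N : ℝ) := by positivity
    have hδN : 1 / (N:ℝ) < δ := by
      have : ((N:ℝ)) = (n₀:ℝ) + 1 := by push_cast [hN]; ring
      rw [this]; exact hn₀
    have hmem : ∀ i : Fin (N+1), (i : ℝ)/(N:ℝ) ∈ Set.Icc (0:ℝ) 1 := by
      intro i
      constructor
      · positivity
      · rw [div_le_one hNpos]
        exact_mod_cast Nat.lt_succ_iff.mp i.2
    set t : Fin (N+1) → I := fun i => ⟨(i:ℝ)/(N:ℝ), hmem i⟩ with ht
    have htmono : StrictMono t := by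
      intro i j hij
      rw [← Subtype.coe_lt_coe]
      exact (div_lt_div_iff_of_pos_right hNpos).mpr (by exact_mod_cast hij)
    have htcast : ∀ i : Fin N, ((t i.castSucc : I) : ℝ) = (i:ℝ)/(N:ℝ) := by
      intro i; simp [ht]
    have htsucc : ∀ i : Fin N, ((t i.succ : I) : ℝ) = ((i:ℝ)+1)/(N:ℝ) := by
      intro i; simp only [ht, Fin.val_succ]; push_cast; ring
    have hIcc_ball : ∀ i : Fin N,
        Set.Icc (t i.castSucc) (t i.succ) ⊆ Metric.ball (t i.castSucc) δ := by
      intro i s hs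
      rw [Metric.mem_ball]
      have h1 : ((t i.castSucc : I) : ℝ) ≤ (s : ℝ) := hs.1
      have h2 : (s : ℝ) ≤ ((t i.succ : I) : ℝ) := hs.2
      have hd : dist s (t i.castSucc) = (s : ℝ) - ((t i.castSucc : I) : ℝ) := by
        rw [Subtype.dist_eq, Real.dist_eq, abs_of_nonneg (by linarith)]
      rw [hd]
      have hlen : ((t i.succ : I) : ℝ) - ((t i.castSucc : I) : ℝ) = 1 / (N:ℝ) := by
        rw [htcast, htsucc]; field_simp; ring
      linarith
    have hchoose : ∀ i : Fin N, ∃ x, Metric.ball (t i.castSucc) δ ⊆ A x :=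
      fun i => hleb (t i.castSucc) trivial
    choose xc hxc using hchoose
    set U' : Fin N → Set Z := fun i => B (xc i) with hU'
    have hIccA : ∀ i : Fin N, Set.Icc (t i.castSucc) (t i.succ) ⊆ A (xc i) :=
      fun i => (hIcc_ball i).trans (hxc i)
    have hγU : ∀ i : Fin N, ∀ s : I, t i.castSucc ≤ s → s ≤ t i.succ → γ.1 s ∈ U' i :=
      fun i s h1 h2 => hmapsto (xc i) (hIccA i ⟨h1, h2⟩)
    have hkeyU : ∀ (i : Fin N) (m : F),
        (Set.Icc (t i.castSucc) (t i.succ) ∩ K m).Nonempty → U' i ⊆ O m := by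
      rintro i m ⟨s, hs1, hs2⟩
      exact hkeyBA (xc i) m ⟨s, hIccA i hs1, hs2⟩
    have hstep : ∀ i : Fin N, t i.castSucc < t i.succ :=
      fun i => htmono (Fin.castSucc_lt_succ (i := i))
    have hsucc_eq : ∀ i j : Fin N, (j : ℕ) = (i : ℕ) + 1 → t i.succ = t j.castSucc := by
      intro i j hij
      apply Subtype.ext
      rw [htsucc, htcast, hij]
      push_cast; ring
    -- choose V'
    have hVexists : ∀ i : Fin N, ∃ Vi, Vi ∈ 𝓑 ∧ γ.1 (t i.succ) ∈ Vi ∧ Vi ⊆ U' i ∧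
        ∀ j : Fin N, (j:ℕ) = (i:ℕ) + 1 → Vi ⊆ U' j := by
      intro i
      have hTopen : IsOpen (U' i ∩ ⋂ j : Fin N, ⋂ (_ : (j:ℕ) = (i:ℕ) + 1), U' j) :=
        (h𝓑.isOpen (hB (xc i))).inter (isOpen_iInter_of_finite fun j =>
          isOpen_iInter_of_finite fun _ => h𝓑.isOpen (hB (xc j)))
      have hγT : γ.1 (t i.succ) ∈ U' i ∩ ⋂ j : Fin N, ⋂ (_ : (j:ℕ) = (i:ℕ) + 1), U' j := by
        refine ⟨hγU i _ (le_of_lt (hstep i)) le_rfl, ?_⟩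
        simp only [Set.mem_iInter]
        intro j hj
        rw [hsucc_eq i j hj]
        exact hγU j _ le_rfl (le_of_lt (hstep j))
      obtain ⟨Vi, hVi𝓑, hγVi, hViT⟩ := h𝓑.exists_subset_of_mem_open hγT hTopen
      refine ⟨Vi, hVi𝓑, hγVi, hViT.trans Set.inter_subset_left, ?_⟩
      intro j hj z hz
      have h3 := (hViT hz).2
      simp only [Set.mem_iInter] at h3
      exact h3 j hj
    choose V' hV'𝓑 hγV' hV'U hV'chain using hVexists
    -- covering property
    have hcover : ∀ s : I, ∃ i : Fin N, t i.castSucc ≤ s ∧ s ≤ t i.succ := by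
      intro s
      have hs0 : (0:ℝ) ≤ (s:ℝ) := s.2.1
      have hs1 : (s:ℝ) ≤ 1 := s.2.2
      set k := min (⌊(s:ℝ) * N⌋₊) (N - 1) with hk
      have hkN : k < N := lt_of_le_of_lt (min_le_right _ _) (Nat.sub_lt (by omega) one_pos)
      refine ⟨⟨k, hkN⟩, ?_, ?_⟩
      · rw [← Subtype.coe_le_coe, htcast]
        have h1 : (k:ℝ) ≤ (s:ℝ) * N := by
          calc (k:ℝ) ≤ (⌊(s:ℝ)*N⌋₊ : ℝ) := by exact_mod_cast min_le_left _ _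
          _ ≤ (s:ℝ) * N := Nat.floor_le (by positivity)
        rw [div_le_iff₀ hNpos]
        simpa using h1
      · rw [← Subtype.coe_le_coe, htsucc]
        have h2 : (s:ℝ) * N ≤ (k:ℝ) + 1 := by
          rcases le_or_gt (⌊(s:ℝ)*N⌋₊) (N-1) with h | h
          · have hke : k = ⌊(s:ℝ)*N⌋₊ := min_eq_left h
            rw [hke]
            exact le_of_lt (Nat.lt_floor_add_one _)
          · have hke : k = N - 1 := min_eq_right (le_of_lt h)
            have hNk : (k:ℝ) + 1 = N := by
              rw [hke]
              have h1N : 1 ≤ N := by omega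
              push_cast [h1N]
              ring
            rw [hNk]
            nlinarith
        rw [le_div_iff₀ hNpos]
        simpa using h2
    refine ⟨pathBasisSet z₀ N U' V' t,
      ⟨N, U', V', t, ⟨fun i => hB (xc i), hV'𝓑, hV'U, hV'chain⟩, htmono, ?_, ?_, rfl⟩, ?_, ?_⟩
    · apply Subtype.ext
      show ((0 : Fin (N+1)) : ℝ)/(N:ℝ) = 0
      simp
    · apply Subtype.ext
      show ((Fin.last N : Fin (N+1)) : ℝ)/(N:ℝ) = 1
      simp only [Fin.val_last]
      exact div_self hNpos.ne'
    · exact fun i => ⟨hγV' i, fun s h1 h2 => hγU i s h1 h2⟩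
    · intro η hη
      apply hbS
      rw [Set.mem_sInter]
      intro m hmF
      have hmm : {f : C(I,Z) | Set.MapsTo f (K ⟨m, hmF⟩) (O ⟨m, hmF⟩)} = m := hm ⟨m, hmF⟩
      rw [← hmm]
      intro s hs
      obtain ⟨i, h1, h2⟩ := hcover s
      exact hkeyU i ⟨m, hmF⟩ ⟨s, ⟨h1, h2⟩, hs⟩ ((hη i).2 s h1 h2)
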